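/- arXiv:1304.0634 — 3 statements merged into one kernel-verified Lean document; each statement's English description precedes it below -/
import Mathlib

section
/- Let L be an algebraically closed field of characteristic zero and let f ∈ L[x_1,…,x_n] have degree d ≥ 2. Suppose f has nonzero terms only in degrees 0, 1 and d, that x_1 − c divides f for some nonzero c ∈ L, and that f is nonsingular, i.e., f and its partial derivatives ∂f/∂x_1,…,∂f/∂x_n have no common zero in L^n. Then f = c'(x_1^d − c^d) + (c'' − c'·d·c^{d−1})(x_1 − c) for some nonzero c', c'' ∈ L. -/
open MvPolynomial

namespace ThreeTermAux

variable {n : ℕ}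

lemma cons_eq_cons_iff {a b : ℕ} {s t : Fin n →₀ ℕ} :
    Finsupp.cons a s = Finsupp.cons b t ↔ a = b ∧ s = t := by
  constructor
  · intro h
    refine ⟨?_, ?_⟩
    · rw [← Finsupp.cons_zero a s, ← Finsupp.cons_zero b t, h]
    · rw [← Finsupp.tail_cons a s, ← Finsupp.tail_cons b t, h]
  · rintro ⟨rfl, rfl⟩; rfl

lemma degree_eq_sum (m : Fin n →₀ ℕ) : m.degree = ∑ i, m i := by
  rw [Finsupp.degree]
  exact Finset.sum_subset (Finset.subset_univ _)
    (fun i _ hi => Finsupp.notMem_support_iff.mp hi)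

lemma degree_cons (k : ℕ) (s : Fin n →₀ ℕ) :
    (Finsupp.cons k s).degree = k + s.degree := by
  rw [degree_eq_sum, degree_eq_sum, Fin.sum_univ_succ, Finsupp.cons_zero]
  simp [Finsupp.cons_succ]

lemma degree_single (j : Fin n) (k : ℕ) : (Finsupp.single j k).degree = k := by
  rcases eq_or_ne k 0 with rfl | h
  · simp
  · rw [Finsupp.degree_apply, Finsupp.support_single_ne_zero _ h]; simp

lemma cons_zero_right (k : ℕ) :
    (Finsupp.cons k (0 : Fin n →₀ ℕ)) = Finsupp.single (0 : Fin (n+1)) k := by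
  ext a
  refine Fin.cases ?_ (fun b => ?_) a
  · simp [Finsupp.cons_zero, Finsupp.single_apply]
  · simp [Finsupp.cons_succ, Finsupp.single_apply, (Fin.succ_ne_zero b).symm]

lemma cons_single_right (k : ℕ) (j : Fin n) :
    (Finsupp.cons k (Finsupp.single j 1)) =
      Finsupp.single (0 : Fin (n+1)) k + Finsupp.single j.succ 1 := by
  ext a
  refine Fin.cases ?_ (fun b => ?_) a
  · simp [Finsupp.cons_zero, Finsupp.single_apply, (Fin.succ_ne_zero j)]
  · simp [Finsupp.cons_succ, Finsupp.single_apply, (Fin.succ_ne_zero b).symm,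
      Fin.succ_inj]

lemma eq_single_of_degree_one {s : Fin n →₀ ℕ} (h : s.degree = 1) :
    ∃ j, s = Finsupp.single j 1 := by
  have hs : s ≠ 0 := by
    intro h0; rw [h0] at h; simp at h
  obtain ⟨j, hj⟩ := Finsupp.support_nonempty_iff.mpr hs
  have hj1 : 1 ≤ s j := Nat.one_le_iff_ne_zero.mpr (Finsupp.mem_support_iff.mp hj)
  have hle : s j ≤ 1 := h ▸ Finsupp.le_degree j s
  refine ⟨j, ?_⟩
  ext a
  rcases eq_or_ne a j with rfl | ha
  · simp; omega
  · simp [Finsupp.single_apply, ha.symm]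
    by_contra h0
    have haj : ({a, j} : Finset (Fin n)) ⊆ s.support := by
      intro x hx
      simp at hx
      rcases hx with rfl | rfl
      · exact Finsupp.mem_support_iff.mpr h0
      · exact hj
    have h2 : s a + s j ≤ s.degree := by
      rw [Finsupp.degree, ← Finset.sum_pair ha]
      exact Finset.sum_le_sum_of_subset haj
    omega

variable {L : Type*} [Field L]

lemma key (f : MvPolynomial (Fin (n + 1)) L) (d : ℕ) (hdeg : f.totalDegree ≤ d)
    (c : L) (hdvd : (X 0 - C c) ∣ f) (s : Fin n →₀ ℕ) :
    ∑ k ∈ Finset.range (d + 1), c ^ k * coeff (Finsupp.cons k s) f = 0 := by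
  have hC : finSuccEquiv L n (C c) = Polynomial.C (C c) := by
    simp [MvPolynomial.finSuccEquiv_apply]
  have hdvd2 : (Polynomial.X - Polynomial.C (C c)) ∣ finSuccEquiv L n f := by
    obtain ⟨g, hg⟩ := hdvd
    exact ⟨finSuccEquiv L n g, by rw [hg, map_mul, map_sub, finSuccEquiv_X_zero, hC]⟩
  have hroot : Polynomial.eval (C c) (finSuccEquiv L n f) = 0 :=
    Polynomial.dvd_iff_isRoot.mp hdvd2
  have hnat : (finSuccEquiv L n f).natDegree < d + 1 := by
    rw [natDegree_finSuccEquiv]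
    exact lt_of_le_of_lt (degreeOf_le_totalDegree f 0) (by omega)
  have hsum := (Polynomial.eval_eq_sum_range' hnat (C c : MvPolynomial (Fin n) L)).symm.trans hroot
  have := congrArg (MvPolynomial.coeff s) hsum
  rw [MvPolynomial.coeff_sum, coeff_zero] at this
  rw [← this]
  apply Finset.sum_congr rfl
  intro k _
  conv_rhs => rw [← C_pow, mul_comm, MvPolynomial.coeff_C_mul, finSuccEquiv_coeff_coeff]

lemma degzero (f : MvPolynomial (Fin (n + 1)) L) (d : ℕ)
    (hterms : f = homogeneousComponent 0 f + homogeneousComponent 1 f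
        + homogeneousComponent d f)
    {m : Fin (n + 1) →₀ ℕ} (h0 : m.degree ≠ 0) (h1 : m.degree ≠ 1) (hd : m.degree ≠ d) :
    coeff m f = 0 := by
  conv_lhs => rw [hterms]
  simp only [coeff_add, coeff_homogeneousComponent, h0, h1, hd, if_false]
  simp only [add_zero]

end ThreeTermAux
open ThreeTermAux in
/-- Corollary (nonsingular): if `f` has terms only in degrees `0, 1, d` with `d ≥ 2`,
`x₁ - c ∣ f` for some nonzero `c`, and `f` is nonsingular, then
`f = c'(x₁^d - c^d) + (c'' - c'·d·c^(d-1))(x₁ - c)` for some nonzero `c', c''`. -/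
theorem nonsingular_three_term_with_linear_factor
    {L : Type*} [Field L] [IsAlgClosed L] [CharZero L] {n : ℕ}
    (f : MvPolynomial (Fin (n + 1)) L) (d : ℕ) (hd : 2 ≤ d)
    (hdeg : f.totalDegree = d)
    (hterms : f = homogeneousComponent 0 f + homogeneousComponent 1 f
        + homogeneousComponent d f)
    (c : L) (hc : c ≠ 0) (hdvd : (X 0 - C c) ∣ f)
    (hns : ¬ ∃ a : Fin (n + 1) → L, eval a f = 0 ∧ ∀ j, eval a (pderiv j f) = 0) :
    ∃ c' c'' : L, c' ≠ 0 ∧ c'' ≠ 0 ∧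
      f = C c' * (X 0 ^ d - C (c ^ d)) + C (c'' - c' * (d : L) * c ^ (d - 1)) * (X 0 - C c) := by
  classical
  set A := coeff (0 : Fin (n+1) →₀ ℕ) f with hAdef
  set L0 := coeff (Finsupp.single (0 : Fin (n+1)) 1) f with hL0def
  set G0 := coeff (Finsupp.single (0 : Fin (n+1)) d) f with hG0def
  set Lc := fun j : Fin n => coeff (Finsupp.cons 0 (Finsupp.single j 1)) f with hLcdef
  set B := fun j : Fin n => coeff (Finsupp.cons (d-1) (Finsupp.single j 1)) f with hBdef
  have hkey := key f d (le_of_eq hdeg) c hdvd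
  have hdz : ∀ {m : Fin (n+1) →₀ ℕ}, m.degree ≠ 0 → m.degree ≠ 1 → m.degree ≠ d →
      coeff m f = 0 := fun h0 h1 hdd => degzero f d hterms h0 h1 hdd
  have R2 : ∀ (k : ℕ) (s : Fin n →₀ ℕ), 2 ≤ s.degree → coeff (Finsupp.cons k s) f = 0 := by
    intro k s h2
    by_cases hcase : k + s.degree = d
    · have h := hkey s
      have hsingle : ∑ k' ∈ Finset.range (d+1), c ^ k' * coeff (Finsupp.cons k' s) f
          = c ^ k * coeff (Finsupp.cons k s) f := by
        apply Finset.sum_eq_single_of_mem k (Finset.mem_range.mpr (by omega))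
        intro b _ hbk
        have hb : coeff (Finsupp.cons b s) f = 0 := by
          apply hdz <;> rw [degree_cons] <;> omega
        rw [hb, mul_zero]
      rw [hsingle] at h
      exact (mul_eq_zero.mp h).resolve_left (pow_ne_zero _ hc)
    · apply hdz <;> rw [degree_cons] <;> omega
  have R0 : A + c * L0 + c ^ d * G0 = 0 := by
    have h := hkey 0
    have hsub : ({0, 1, d} : Finset ℕ) ⊆ Finset.range (d+1) := by
      intro x hx
      simp only [Finset.mem_insert, Finset.mem_singleton] at hx
      rw [Finset.mem_range]; omega
    rw [← Finset.sum_subset hsub (by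
      intro x _ hx
      simp only [Finset.mem_insert, Finset.mem_singleton, not_or] at hx
      have hx0 : coeff (Finsupp.cons x (0 : Fin n →₀ ℕ)) f = 0 := by
        apply hdz <;> rw [degree_cons, map_zero] <;> omega
      rw [hx0, mul_zero])] at h
    rw [Finset.sum_insert (by simp; omega), Finset.sum_insert (by simp; omega),
      Finset.sum_singleton] at h
    simp only [cons_zero_right, Finsupp.single_zero, pow_zero, pow_one, one_mul] at h
    linear_combination h
  have R1 : ∀ j : Fin n, Lc j + c ^ (d-1) * B j = 0 := by
    intro j
    have h := hkey (Finsupp.single j 1)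
    have hsub : ({0, d-1} : Finset ℕ) ⊆ Finset.range (d+1) := by
      intro x hx
      simp only [Finset.mem_insert, Finset.mem_singleton] at hx
      rw [Finset.mem_range]; omega
    rw [← Finset.sum_subset hsub (by
      intro x _ hx
      simp only [Finset.mem_insert, Finset.mem_singleton, not_or] at hx
      have hx0 : coeff (Finsupp.cons x (Finsupp.single j 1)) f = 0 := by
        apply hdz <;> rw [degree_cons, degree_single] <;> omega
      rw [hx0, mul_zero])] at h
    rw [Finset.sum_insert (by simp; omega), Finset.sum_singleton, pow_zero, one_mul] at h
    exact h
  have ClaimX : f = monomial 0 A + monomial (Finsupp.single 0 1) L0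
      + (∑ j, monomial (Finsupp.cons 0 (Finsupp.single j 1)) (Lc j))
      + monomial (Finsupp.single 0 d) G0
      + ∑ j, monomial (Finsupp.cons (d-1) (Finsupp.single j 1)) (B j) := by
    apply MvPolynomial.ext
    intro m
    obtain ⟨k, s, rfl⟩ : ∃ k s, m = Finsupp.cons k s :=
      ⟨m 0, Finsupp.tail m, (Finsupp.cons_tail m).symm⟩
    rw [coeff_add, coeff_add, coeff_add, coeff_add, MvPolynomial.coeff_sum,
      MvPolynomial.coeff_sum]
    simp only [coeff_monomial]
    rw [show (0 : Fin (n+1) →₀ ℕ) = Finsupp.cons 0 0 from Finsupp.cons_zero_zero.symm,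
        show (Finsupp.single (0:Fin (n+1)) 1) = Finsupp.cons 1 0 from (cons_zero_right 1).symm,
        show (Finsupp.single (0:Fin (n+1)) d) = Finsupp.cons d 0 from (cons_zero_right d).symm]
    simp only [cons_eq_cons_iff]
    rcases lt_or_ge s.degree 2 with hlt | hge
    · have h01 : s.degree = 0 ∨ s.degree = 1 := by omega
      rcases h01 with h0 | h1
      · have hs0 : s = 0 := (Finsupp.degree_eq_zero_iff s).mp h0
        subst hs0
        simp only [Finsupp.single_eq_zero, one_ne_zero, and_false, if_false,
          Finset.sum_const_zero, add_zero, and_true]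
        by_cases hk0 : k = 0
        · subst hk0
          rw [if_pos rfl, if_neg (by omega), if_neg (by omega), Finsupp.cons_zero_zero,
            ← hAdef]
          ring
        · by_cases hk1 : k = 1
          · subst hk1
            rw [if_pos rfl, if_neg (by omega), if_neg (by omega), cons_zero_right, ← hL0def]
            ring
          · by_cases hkd : k = d
            · subst hkd
              rw [if_pos rfl, if_neg (by omega), if_neg (by omega), cons_zero_right, ← hG0def]
              ring
            · rw [if_neg (by omega), if_neg (by omega), if_neg (by omega)]
              have hcz : coeff (Finsupp.cons k (0 : Fin n →₀ ℕ)) f = 0 := by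
                apply hdz <;> rw [degree_cons, map_zero] <;> omega
              rw [hcz]; ring
      · obtain ⟨j0, rfl⟩ := eq_single_of_degree_one h1
        have hsne : (0 : Fin n →₀ ℕ) ≠ Finsupp.single j0 1 :=
          fun hbad => one_ne_zero (Finsupp.single_eq_zero.mp hbad.symm)
        rw [if_neg (by rintro ⟨-, hbad⟩; exact hsne hbad),
          if_neg (by rintro ⟨-, hbad⟩; exact hsne hbad),
          if_neg (by rintro ⟨-, hbad⟩; exact hsne hbad)]
        rw [Finset.sum_eq_single j0 (fun b _ hb => if_neg (by
              rintro ⟨-, hbad⟩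
              exact hb ((Finsupp.single_left_inj one_ne_zero).mp hbad)))
            (fun habs => absurd (Finset.mem_univ j0) habs),
          Finset.sum_eq_single j0 (fun b _ hb => if_neg (by
              rintro ⟨-, hbad⟩
              exact hb ((Finsupp.single_left_inj one_ne_zero).mp hbad)))
            (fun habs => absurd (Finset.mem_univ j0) habs)]
        have hLc0 : Lc j0 = coeff (Finsupp.cons 0 (Finsupp.single j0 1)) f := by
          rw [hLcdef]
        have hB0 : B j0 = coeff (Finsupp.cons (d-1) (Finsupp.single j0 1)) f := by
          rw [hBdef]
        by_cases hk0 : k = 0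
        · subst hk0
          rw [if_pos ⟨rfl, rfl⟩, if_neg (by rintro ⟨hbad, -⟩; omega), ← hLc0]
          ring
        · by_cases hkd1 : k = d - 1
          · subst hkd1
            rw [if_neg (by rintro ⟨hbad, -⟩; omega), if_pos ⟨rfl, rfl⟩, ← hB0]
            ring
          · rw [if_neg (by rintro ⟨hbad, -⟩; omega), if_neg (by rintro ⟨hbad, -⟩; omega)]
            have hcz : coeff (Finsupp.cons k (Finsupp.single j0 1)) f = 0 := by
              apply hdz <;> rw [degree_cons, degree_single] <;> omega
            rw [hcz]; ring
    · have hzero : coeff (Finsupp.cons k s) f = 0 := R2 k s hge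
      have hsne0 : (0 : Fin n →₀ ℕ) ≠ s := by
        intro hbad; rw [← hbad] at hge; simp at hge
      have hsne1 : ∀ j : Fin n, Finsupp.single j 1 ≠ s := by
        intro j hbad; rw [← hbad, degree_single] at hge; omega
      rw [hzero, if_neg (by rintro ⟨-, hbad⟩; exact hsne0 hbad),
        if_neg (by rintro ⟨-, hbad⟩; exact hsne0 hbad),
        if_neg (by rintro ⟨-, hbad⟩; exact hsne0 hbad)]
      rw [Finset.sum_eq_zero (fun j _ => if_neg (by rintro ⟨-, hbad⟩; exact hsne1 j hbad)),
        Finset.sum_eq_zero (fun j _ => if_neg (by rintro ⟨-, hbad⟩; exact hsne1 j hbad))]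
      ring
  have e1 : (C A : MvPolynomial (Fin (n+1)) L) = monomial 0 A := C_apply
  have e2 : (C L0 * X 0 : MvPolynomial (Fin (n+1)) L) = monomial (Finsupp.single 0 1) L0 := by
    rw [← pow_one (X (0 : Fin (n+1)) : MvPolynomial (Fin (n+1)) L), C_mul_X_pow_eq_monomial]
  have e3 : ∀ j : Fin n, (C (Lc j) * X (Fin.succ j) : MvPolynomial (Fin (n+1)) L)
      = monomial (Finsupp.cons 0 (Finsupp.single j 1)) (Lc j) := by
    intro j
    rw [← pow_one (X (Fin.succ j) : MvPolynomial (Fin (n+1)) L), C_mul_X_pow_eq_monomial,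
      show Finsupp.cons 0 (Finsupp.single j 1) = Finsupp.single (Fin.succ j) 1 by
        rw [cons_single_right, Finsupp.single_zero, zero_add]]
  have e4 : (C G0 * X 0 ^ d : MvPolynomial (Fin (n+1)) L) = monomial (Finsupp.single 0 d) G0 :=
    C_mul_X_pow_eq_monomial
  have e5 : ∀ j : Fin n, (C (B j) * (X 0 ^ (d-1) * X (Fin.succ j)) : MvPolynomial (Fin (n+1)) L)
      = monomial (Finsupp.cons (d-1) (Finsupp.single j 1)) (B j) := by
    intro j
    rw [X_pow_eq_monomial, ← pow_one (X (Fin.succ j) : MvPolynomial (Fin (n+1)) L),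
      X_pow_eq_monomial, monomial_mul, C_mul_monomial, cons_single_right, mul_one, mul_one]
  have ClaimX' : f = C A + C L0 * X 0 + (∑ j, C (Lc j) * X (Fin.succ j))
      + C G0 * X 0 ^ d + ∑ j, C (B j) * (X 0 ^ (d-1) * X (Fin.succ j)) := by
    rw [ClaimX, ← e1, ← e2, ← e4, ← Finset.sum_congr rfl (fun j _ => e3 j),
      ← Finset.sum_congr rfl (fun j _ => e5 j)]
  have hd1 : ((d - 1 : ℕ) : L) ≠ 0 := Nat.cast_ne_zero.mpr (by omega)
  have N1 : ∀ i : Fin n, Lc i = 0 := by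
    by_contra hcon
    push_neg at hcon
    obtain ⟨i, hi⟩ := hcon
    have hBi : B i ≠ 0 := by
      intro h0
      have h := R1 i
      rw [h0, mul_zero, add_zero] at h
      exact hi h
    have hden : ((d - 1 : ℕ) : L) * B i * c ^ (d - 2) ≠ 0 :=
      mul_ne_zero (mul_ne_zero hd1 hBi) (pow_ne_zero _ hc)
    set t : L := -(L0 + d * G0 * c ^ (d-1)) / (((d - 1 : ℕ) : L) * B i * c ^ (d - 2)) with htdef
    have ht : t * (((d - 1 : ℕ) : L) * B i * c ^ (d - 2)) = -(L0 + d * G0 * c ^ (d-1)) :=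
      div_mul_cancel₀ _ hden
    apply hns
    refine ⟨Fin.cons c (fun j => if j = i then t else 0), ?_, ?_⟩
    · rw [ClaimX']
      simp only [map_add, map_mul, map_pow, eval_C, eval_X, map_sum, Fin.cons_zero,
        Fin.cons_succ, mul_ite, mul_zero, Finset.sum_ite_eq', Finset.mem_univ, if_pos]
      linear_combination R0 + t * R1 i
    · intro j
      refine Fin.cases ?_ (fun b => ?_) j
      · rw [ClaimX']
        simp only [map_add, pderiv_C, pderiv_C_mul, pderiv_X_self, pderiv_pow,
          pderiv_X_of_ne (Fin.succ_ne_zero _), map_sum, pderiv_mul, map_zero, mul_zero,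
          zero_mul, zero_add, add_zero, mul_one, map_mul, map_pow, eval_C, eval_X, map_natCast,
          map_one, Fin.cons_zero, Fin.cons_succ, mul_ite, Finset.sum_ite_eq', Finset.mem_univ,
          if_pos, Finset.sum_const_zero, show d - 1 - 1 = d - 2 from by omega]
        linear_combination ht
      · rw [ClaimX']
        simp only [map_add, pderiv_C, pderiv_C_mul, pderiv_pow, map_sum, pderiv_mul,
          pderiv_X_of_ne (show (0 : Fin (n+1)) ≠ Fin.succ b from (Fin.succ_ne_zero b).symm),
          pderiv_X, Pi.single_apply, Fin.succ_inj, apply_ite, map_one, map_zero, mul_zero,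
          zero_mul, zero_add, add_zero, mul_one, map_mul, map_pow, eval_C, eval_X,
          map_natCast, Fin.cons_zero, Fin.cons_succ, mul_ite, ite_mul, Finset.sum_ite_eq',
          Finset.mem_univ, if_pos, Finset.sum_const_zero]
        linear_combination R1 b
  have N2 : ∀ j : Fin n, B j = 0 := by
    intro j
    have h := R1 j
    rw [N1 j, zero_add] at h
    exact (mul_eq_zero.mp h).resolve_left (pow_ne_zero _ hc)
  have hf3 : f = C A + C L0 * X 0 + C G0 * X 0 ^ d := by
    rw [ClaimX']
    simp only [N1, N2, map_zero, zero_mul, Finset.sum_const_zero, add_zero]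
  have hG0 : G0 ≠ 0 := by
    intro h0
    rw [h0, map_zero, zero_mul, add_zero] at hf3
    have h1 : (C A + C L0 * X 0 : MvPolynomial (Fin (n+1)) L).totalDegree ≤ 1 := by
      apply le_trans (totalDegree_add _ _)
      apply max_le
      · simp [totalDegree_C]
      · exact le_trans (totalDegree_mul _ _) (by simp [totalDegree_C, totalDegree_X])
    rw [← hf3, hdeg] at h1
    omega
  have hc'' : L0 + (d : L) * G0 * c ^ (d - 1) ≠ 0 := by
    intro h0
    apply hns
    refine ⟨Fin.cons c 0, ?_, ?_⟩
    · rw [hf3]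
      simp only [map_add, map_mul, map_pow, eval_C, eval_X, Fin.cons_zero]
      linear_combination R0
    · intro j
      refine Fin.cases ?_ (fun b => ?_) j
      · rw [hf3]
        simp only [map_add, pderiv_C, pderiv_C_mul, pderiv_X_self, pderiv_pow, mul_one,
          map_mul, map_pow, map_natCast, eval_C, eval_X, Fin.cons_zero, zero_add, add_zero]
        linear_combination h0
      · rw [hf3]
        simp [pderiv_X_of_ne (show (0 : Fin (n+1)) ≠ Fin.succ b from (Fin.succ_ne_zero b).symm),
          pderiv_pow]
  refine ⟨G0, L0 + (d : L) * G0 * c ^ (d - 1), hG0, hc'', ?_⟩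
  rw [hf3, show A = -(c * L0 + c ^ d * G0) from by linear_combination R0]
  simp only [map_sub, map_add, map_mul, map_neg, map_pow]
  ring
end

section
/- Let K be a field of characteristic zero and let f ∈ K[x_1,…,x_n] be nonzero with a factorization f = g·h such that h(0) ≠ 0. Let g* ∈ K[x]. If g* divides the degree-k homogeneous component f^{(k)} of f for every k = 0, 1, …, deg g, then g* divides g. -/
open MvPolynomial

private lemma finsupp_degree_add {σ : Type*} (a b : σ →₀ ℕ) :
    Finsupp.degree (a + b) = Finsupp.degree a + Finsupp.degree b := by
  simp [Finsupp.degree_eq_weight_one, map_add]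

/-- If `a` has zero constant term, then all coefficients of `a ^ N` in degrees `< N` vanish. -/
private lemma coeff_pow_eq_zero {K : Type*} [CommRing K] {σ : Type*} [DecidableEq σ]
    {a : MvPolynomial σ K} (ha : constantCoeff a = 0) :
    ∀ (N : ℕ) (m : σ →₀ ℕ), Finsupp.degree m < N → coeff m (a ^ N) = 0 := by
  intro N
  induction N with
  | zero => intro m hm; omega
  | succ N ih =>
    intro m hm
    rw [pow_succ', coeff_mul]
    apply Finset.sum_eq_zero
    rintro ⟨s, t⟩ hst
    rw [Finset.HasAntidiagonal.mem_antidiagonal] at hst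
    by_cases hs : s = 0
    · subst hs
      have : coeff (0 : σ →₀ ℕ) a = 0 := ha
      simp [this]
    · have hs1 : 1 ≤ Finsupp.degree s := by
        rcases Nat.eq_zero_or_pos (Finsupp.degree s) with h0 | h0
        · exact absurd ((Finsupp.degree_eq_zero_iff s).mp h0) hs
        · exact h0
      have hdeg : Finsupp.degree s + Finsupp.degree t = Finsupp.degree m := by
        rw [← hst, finsupp_degree_add]
      have : Finsupp.degree t < N := by omega
      rw [ih t this, mul_zero]

private lemma homogeneousComponent_mul_eq_zero {K : Type*} [CommRing K] {σ : Type*} [DecidableEq σ]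
    {a : MvPolynomial σ K} (ha : constantCoeff a = 0) (b : MvPolynomial σ K)
    {k N : ℕ} (hk : k < N) :
    homogeneousComponent k (b * a ^ N) = 0 := by
  ext m
  rw [coeff_homogeneousComponent]
  split_ifs with hm
  · rw [coeff_mul]
    apply Finset.sum_eq_zero
    rintro ⟨s, t⟩ hst
    rw [Finset.HasAntidiagonal.mem_antidiagonal] at hst
    have hdeg : Finsupp.degree s + Finsupp.degree t = k := by
      rw [← hm, ← hst, finsupp_degree_add]
    have : Finsupp.degree t < N := by omega
    rw [coeff_pow_eq_zero ha _ _ this, mul_zero]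
  · simp

/-- Lemma (x_1|flem): if `f = g·h` is nonzero with `h(0) ≠ 0`, and `g*` divides the
homogeneous components of `f` of degrees `0, 1, …, deg g`, then `g* ∣ g`. -/
theorem dvd_factor_of_dvd_low_homogeneous_components
    {K : Type*} [Field K] [CharZero K] {n : ℕ}
    (f g h gstar : MvPolynomial (Fin n) K)
    (hf : f ≠ 0) (hfgh : f = g * h) (hh0 : constantCoeff h ≠ 0)
    (hdvd : ∀ k ≤ g.totalDegree, gstar ∣ homogeneousComponent k f) :
    gstar ∣ g := by
  set c : K := constantCoeff h with hc
  set d : ℕ := g.totalDegree with hd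
  set u : MvPolynomial (Fin n) K := 1 - C c⁻¹ * h with hu
  have hu0 : constantCoeff u = 0 := by
    simp [hu, map_mul, ← hc, inv_mul_cancel₀ hh0]
  set P : MvPolynomial (Fin n) K :=
    C c⁻¹ * ∑ i ∈ Finset.range (d + 1), u ^ i with hP
  -- h * P = 1 - u ^ (d + 1)
  have hhP : h * P = 1 - u ^ (d + 1) := by
    have h1u : (1 : MvPolynomial (Fin n) K) - u = C c⁻¹ * h := by ring
    calc h * P = (1 - u) * ∑ i ∈ Finset.range (d + 1), u ^ i := by
            rw [h1u]; ring
      _ = 1 - u ^ (d + 1) := mul_neg_geom_sum u (d + 1)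
  -- f * P = g - g * u ^ (d+1)
  have hfP : f * P = g - g * u ^ (d + 1) := by
    rw [hfgh, mul_assoc, hhP]; ring
  -- g* divides each homogeneous component of f * P in degrees ≤ d
  have key : ∀ k ≤ d, gstar ∣ homogeneousComponent k (f * P) := by
    intro k hk
    conv_rhs => rw [← sum_homogeneousComponent f, ← sum_homogeneousComponent P]
    rw [Finset.sum_mul_sum, map_sum]
    apply Finset.dvd_sum
    intro i hi
    rw [map_sum]
    apply Finset.dvd_sum
    intro j hj
    have hmem : homogeneousComponent i f * homogeneousComponent j P ∈
        homogeneousSubmodule (Fin n) K (i + j) := by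
      rw [mem_homogeneousSubmodule]
      exact (homogeneousComponent_isHomogeneous i f).mul
        (homogeneousComponent_isHomogeneous j P)
    rw [homogeneousComponent_of_mem hmem]
    split_ifs with hij
    · have : i ≤ d := by omega
      exact (hdvd i this).mul_right _
    · exact dvd_zero _
  -- components of g equal components of f * P for k ≤ d
  have hcomp : ∀ k ≤ d, gstar ∣ homogeneousComponent k g := by
    intro k hk
    have hz : homogeneousComponent k (g * u ^ (d + 1)) = 0 :=
      homogeneousComponent_mul_eq_zero hu0 g (by omega)
    have : homogeneousComponent k g = homogeneousComponent k (f * P) := by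
      rw [hfP, map_sub, hz, sub_zero]
    rw [this]
    exact key k hk
  conv_rhs => rw [← sum_homogeneousComponent g]
  apply Finset.dvd_sum
  intro k hk
  rw [Finset.mem_range] at hk
  exact hcomp k (by omega)
end

section
/- Let K be a field of characteristic zero and let F = (F_1,…,F_n) ∈ K[x_1,…,x_n]^n be a Keller map whose Jacobian matrix jac F is symmetric. If for some index i there are c, c' ∈ K and h ∈ K[x] such that F_i = c'·x_i + x_i²·h + c, then h = 0. -/
open MvPolynomial

private lemma pderiv_comm' {K : Type*} [CommSemiring K] {σ : Type*} [DecidableEq σ]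
    (i j : σ) (p : MvPolynomial σ K) :
    pderiv i (pderiv j p) = pderiv j (pderiv i p) := by
  rcases eq_or_ne i j with rfl | hij
  · rfl
  · induction p using MvPolynomial.induction_on' with
    | monomial s a =>
      simp only [pderiv_monomial]
      have h1 : ((s - Finsupp.single j 1 : (σ →₀ ℕ))) i = s i := by
        rw [Finsupp.tsub_apply, Finsupp.single_eq_of_ne' hij.symm, tsub_zero]
      have h2 : ((s - Finsupp.single i 1 : (σ →₀ ℕ))) j = s j := by
        rw [Finsupp.tsub_apply, Finsupp.single_eq_of_ne' hij, tsub_zero]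
      rw [h1, h2, tsub_tsub, tsub_tsub, add_comm (Finsupp.single j 1)]
      ring_nf
    | add p q hp hq => simp only [map_add, hp, hq]

private lemma units_eq_C' {K : Type*} [Field K] :
    ∀ {n : ℕ} (p : MvPolynomial (Fin n) K), IsUnit p → ∃ d : K, p = C d := by
  intro n
  induction n with
  | zero =>
    intro p _
    exact ⟨_, eq_C_of_isEmpty p⟩
  | succ m ih =>
    intro p hp
    have hup : IsUnit (finSuccEquiv K m p) := hp.map _
    obtain ⟨r, hr, hrp⟩ := Polynomial.isUnit_iff.mp hup
    obtain ⟨d, rfl⟩ := ih r hr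
    refine ⟨d, ?_⟩
    have h1 : p = (finSuccEquiv K m).symm (Polynomial.C (C d)) := by
      rw [hrp, AlgEquiv.symm_apply_apply]
    rw [h1]
    have h2 : (Polynomial.C (C d) : Polynomial (MvPolynomial (Fin m) K))
        = algebraMap K _ d := rfl
    rw [h2, AlgEquiv.commutes]
    rfl

private lemma dvd_pderiv_prod {K : Type*} [CommRing K] {σ : Type*} (i : σ)
    (p : MvPolynomial σ K)
    {ι : Type*} [DecidableEq ι] (S : Finset ι) (f : ι → MvPolynomial σ K)
    (H : ∀ j ∈ S, p ∣ pderiv i (f j)) : p ∣ pderiv i (∏ j ∈ S, f j) := by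
  induction S using Finset.induction with
  | empty => simp
  | @insert a S ha ih =>
    rw [Finset.prod_insert ha, pderiv_mul]
    exact dvd_add ((H a (Finset.mem_insert_self a S)).mul_right _)
      ((ih fun j hj => H j (Finset.mem_insert_of_mem hj)).mul_left _)

private lemma dvd_pderiv_det {K : Type*} [CommRing K] {σ : Type*} {m : ℕ} (i : σ)
    (p : MvPolynomial σ K)
    (M : Matrix (Fin m) (Fin m) (MvPolynomial σ K))
    (H : ∀ j k, p ∣ pderiv i (M j k)) : p ∣ pderiv i M.det := by
  rw [Matrix.det_apply, map_sum]
  refine Finset.dvd_sum fun σ' _ => ?_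
  rw [Units.smul_def, map_zsmul, zsmul_eq_mul]
  exact (dvd_pderiv_prod i p Finset.univ _ (fun j _ => H _ _)).mul_left _

private lemma pderiv_dvd_of_pow_dvd {K : Type*} [CommRing K] {σ : Type*} [DecidableEq σ]
    (i k : σ) {m : ℕ} {q : MvPolynomial σ K}
    (hq : X i ^ (m + 1) ∣ q) : X i ^ m ∣ pderiv k q := by
  obtain ⟨g, rfl⟩ := hq
  rw [pderiv_mul, pderiv_pow]
  refine dvd_add (Dvd.dvd.mul_right ?_ g) ((pow_dvd_pow (X i) (Nat.le_succ m)).mul_right _)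
  rcases eq_or_ne k i with rfl | hk
  · rw [pderiv_X_self, mul_one, Nat.add_sub_cancel]
    exact Dvd.dvd.mul_left dvd_rfl _
  · rw [pderiv_X_of_ne hk.symm, mul_zero]
    exact dvd_zero _

/-- Lemma (symdiag): if `F` is a Keller map with symmetric Jacobian and
`Fᵢ = c'·xᵢ + xᵢ²·h + c`, then `h = 0`. -/
theorem keller_symmetric_diagonal_component
    {K : Type*} [Field K] [CharZero K] {n : ℕ}
    (F : Fin n → MvPolynomial (Fin n) K)
    (hKeller : IsUnit (Matrix.of fun i j : Fin n => pderiv j (F i)).det)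
    (hsym : ∀ j k, pderiv k (F j) = pderiv j (F k))
    (i : Fin n) (c c' : K) (h : MvPolynomial (Fin n) K)
    (hFi : F i = C c' * X i + X i ^ 2 * h + C c) :
    h = 0 := by
  classical
  set A : Matrix (Fin n) (Fin n) (MvPolynomial (Fin n) K) :=
    Matrix.of (fun j k : Fin n => pderiv k (F j)) with hA
  obtain ⟨d, hdet⟩ := units_eq_C' _ hKeller
  have hd0 : d ≠ 0 := by
    rintro rfl
    exact hKeller.ne_zero (hdet.trans (map_zero C))
  have hFij : ∀ j : Fin n, j ≠ i → pderiv j (F i) = X i ^ 2 * pderiv j h := by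
    intro j hj
    rw [hFi]
    simp [pderiv_mul, pderiv_pow, pderiv_X_of_ne hj.symm, pderiv_C, pderiv_C_mul]
  have hAii : A i i = C c' + pderiv i (X i ^ 2 * h) := by
    show pderiv i (F i) = _
    rw [hFi, map_add, map_add, pderiv_C_mul, pderiv_X_self, mul_one, pderiv_C, add_zero]
  have key : ∀ k : ℕ, X i ^ k ∣ h := by
    intro k
    induction k with
    | zero => simpa using one_dvd h
    | succ k ih =>
      obtain ⟨g, hg⟩ := ih
      have hcol2 : ∀ j : Fin n, j ≠ i → X i ^ (k + 2) ∣ X i ^ 2 * pderiv j h := by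
        intro j hj
        have hdvd : X i ^ k ∣ pderiv j h := by
          rw [hg, pderiv_mul]
          have e0 : pderiv j (X i ^ k) = (0 : MvPolynomial (Fin n) K) := by
            rw [pderiv_pow, pderiv_X_of_ne hj.symm, mul_zero]
          rw [e0, zero_mul, zero_add]
          exact dvd_mul_right (X i ^ k) (pderiv j g)
        have e : (X i ^ (k + 2) : MvPolynomial (Fin n) K) = X i ^ 2 * X i ^ k := by ring
        rw [e]
        exact mul_dvd_mul_left _ hdvd
      have hcol : ∀ j : Fin n, j ≠ i → X i ^ (k + 2) ∣ A j i := by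
        intro j hj
        have e : A j i = X i ^ 2 * pderiv j h := by
          show pderiv i (F j) = _
          rw [hsym j i, hFij j hj]
        rw [e]
        exact hcol2 j hj
      have hsum : ∑ j, A.adjugate i j * A j i = C d := by
        have h1 : (A.adjugate * A) i i = C d := by
          rw [Matrix.adjugate_mul, Matrix.smul_apply, Matrix.one_apply_eq, smul_eq_mul,
            mul_one, hdet]
        simpa [Matrix.mul_apply] using h1
      set D : MvPolynomial (Fin n) K := A.adjugate i i with hD
      set W : MvPolynomial (Fin n) K :=
        ∑ j ∈ Finset.univ.erase i, A.adjugate i j * A j i with hW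
      have hDt : D * A i i = C d - W := by
        rw [eq_sub_iff_add_eq, add_comm]
        exact (Finset.sum_erase_add Finset.univ _ (Finset.mem_univ i)).trans hsum
      have hWdvd : X i ^ (k + 2) ∣ W :=
        Finset.dvd_sum fun j hj => ((hcol j (Finset.ne_of_mem_erase hj)).mul_left _)
      have hDdvd : X i ^ (k + 1) ∣ pderiv i D := by
        rw [hD, Matrix.adjugate_apply]
        refine dvd_pderiv_det i _ _ fun j l => ?_
        rcases eq_or_ne j i with rfl | hj
        · rw [Matrix.updateRow_self]
          rcases eq_or_ne l j with rfl | hl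
          · rw [Pi.single_eq_same]
            simp
          · rw [Pi.single_eq_of_ne hl]
            simp
        · rw [Matrix.updateRow_ne hj]
          have e1 : pderiv i (A j l) = pderiv l (X i ^ 2 * pderiv j h) := by
            show pderiv i (pderiv l (F j)) = _
            rw [pderiv_comm' i l, hsym j i, hFij j hj]
          rw [e1]
          exact pderiv_dvd_of_pow_dvd i l (hcol2 j hj)
      have h5 : X i ^ (k + 1) ∣ pderiv i (D * A i i) := by
        rw [hDt, map_sub, pderiv_C, zero_sub, dvd_neg]
        exact pderiv_dvd_of_pow_dvd i i hWdvd
      have h6 : X i ^ (k + 1) ∣ D * pderiv i (A i i) := by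
        rw [pderiv_mul] at h5
        exact (dvd_add_right (hDdvd.mul_right _)).mp h5
      have h8 : X i ^ (k + 1) ∣ C d * pderiv i (A i i) := by
        have e : C d * pderiv i (A i i)
            = A i i * (D * pderiv i (A i i)) + W * pderiv i (A i i) := by
          rw [← mul_assoc, mul_comm (A i i) D, hDt]
          ring
        rw [e]
        exact dvd_add (h6.mul_left _)
          (((pow_dvd_pow (X i) (by omega)).trans hWdvd).mul_right _)
      have h9 : X i ^ (k + 1) ∣ pderiv i (A i i) := by
        have e : pderiv i (A i i) = C d⁻¹ * (C d * pderiv i (A i i)) := by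
          rw [← mul_assoc, ← C_mul, inv_mul_cancel₀ hd0, C_1, one_mul]
        rw [e]
        exact h8.mul_left _
      have hAii2 : pderiv i (A i i) = pderiv i (pderiv i (X i ^ (k + 2) * g)) := by
        rw [hAii, map_add, pderiv_C, zero_add]
        congr 2
        rw [hg]
        ring
      have C2 : (C (2 : K) : MvPolynomial (Fin n) K) = 2 := by
        have e := C_eq_coe_nat (σ := Fin n) (R := K) 2
        simpa using e
      have p2 : (pderiv i) (2 : MvPolynomial (Fin n) K) = 0 := by
        rw [← C2, pderiv_C]
      have eC : (C (((k : K) + 2) * ((k : K) + 1)) : MvPolynomial (Fin n) K)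
          = ((k : MvPolynomial (Fin n) K) + 2) * ((k : MvPolynomial (Fin n) K) + 1) := by
        rw [map_mul, map_add, map_add, C_eq_coe_nat, map_one, C2]
      have comp : pderiv i (pderiv i (X i ^ (k + 2) * g)) =
          C (((k : K) + 2) * ((k : K) + 1)) * (X i ^ k * g)
            + X i ^ (k + 1) * ((2 * ((k : MvPolynomial (Fin n) K) + 2)) * pderiv i g
              + X i * pderiv i (pderiv i g)) := by
        rw [eC]
        simp only [pderiv_mul, pderiv_pow, pderiv_X_self, mul_one, map_add,
          Derivation.map_natCast, Nat.add_sub_cancel, p2]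
        push_cast
        ring
      have hfin : X i ^ (k + 1) ∣ C (((k : K) + 2) * ((k : K) + 1)) * (X i ^ k * g) := by
        rw [hAii2, comp,
          add_comm (C (((k : K) + 2) * ((k : K) + 1)) * (X i ^ k * g))] at h9
        exact (dvd_add_right (dvd_mul_right _ _)).mp h9
      have hcast : (((k : K) + 2) * ((k : K) + 1)) ≠ 0 := by
        have e1 : ((k : K) + 2) = ((k + 2 : ℕ) : K) := by push_cast; ring
        have e2 : ((k : K) + 1) = ((k + 1 : ℕ) : K) := by push_cast; ring
        rw [e1, e2]
        exact mul_ne_zero (Nat.cast_ne_zero.mpr (by omega)) (Nat.cast_ne_zero.mpr (by omega))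
      have hXg : X i ^ (k + 1) ∣ X i ^ k * g := by
        have e : X i ^ k * g
            = C (((k : K) + 2) * ((k : K) + 1))⁻¹
              * (C (((k : K) + 2) * ((k : K) + 1)) * (X i ^ k * g)) := by
          rw [← mul_assoc, ← C_mul, inv_mul_cancel₀ hcast, C_1, one_mul]
        rw [e]
        exact hfin.mul_left _
      have hsg : X i ∣ g := by
        have e : (X i ^ (k + 1) : MvPolynomial (Fin n) K) = X i ^ k * X i := by ring
        rw [e] at hXg
        exact (mul_dvd_mul_iff_left (pow_ne_zero k (X_ne_zero (R := K) i))).mp hXg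
      obtain ⟨g', hg'⟩ := hsg
      exact ⟨g', by rw [hg, hg', pow_succ]; ring⟩
  by_contra hne
  obtain ⟨m, hm⟩ := FiniteMultiplicity.of_not_isUnit
    (fun hu => by
      obtain ⟨d', hd'⟩ := units_eq_C' _ hu
      have := congrArg constantCoeff hd'
      rw [constantCoeff_X, constantCoeff_C] at this
      rw [← this, map_zero] at hd'
      exact X_ne_zero (R := K) i hd') hne
  exact hm (key (m + 1))
end
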